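/- Let R be a commutative ring viewed inside S_n(J_n,R) via scalar matrices. Then the ring extension S_n(J_n,R)/R is a Frobenius extension: there exist an R-R-bimodule homomorphism E : S_n(J_n,R) → R and elements X_0,…,X_{n-1}, Y_0,…,Y_{n-1} ∈ S_n(J_n,R) such that ∑_i E(a X_i) Y_i = a = ∑_i X_i E(Y_i a) for all a. -/

import Mathlib

/-- The nilpotent Jordan block: ones on the superdiagonal, zeros elsewhere. -/
def jordanBlock (n : ℕ) (R : Type*) [CommRing R] : Matrix (Fin n) (Fin n) R :=
  Matrix.of fun i j => if (i : ℕ) + 1 = (j : ℕ) then 1 else 0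

namespace FrobAux
variable {R : Type*} [CommRing R]

lemma jordan_apply {n : ℕ} (i j : Fin n) :
    jordanBlock n R i j = if (i : ℕ) + 1 = (j : ℕ) then 1 else 0 := rfl

lemma jordan_pow_apply {n : ℕ} (k : ℕ) (i j : Fin n) :
    (jordanBlock n R ^ k) i j = if (i : ℕ) + k = (j : ℕ) then 1 else 0 := by
  induction k generalizing i with
  | zero =>
    simp [Matrix.one_apply, Fin.ext_iff]
  | succ k ih =>
    rw [pow_succ', Matrix.mul_apply]
    by_cases h : (i : ℕ) + 1 < n
    · rw [Finset.sum_eq_single (⟨(i:ℕ)+1, h⟩ : Fin n)]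
      · rw [jordan_apply, ih, if_pos (by simp), one_mul]
        simp only [Fin.val_mk]
        split_ifs <;> first | rfl | omega
      · intro b _ hb
        have hib : (i : ℕ) + 1 ≠ (b : ℕ) :=
          fun hc => hb (Fin.eq_mk_iff_val_eq.mpr hc.symm)
        rw [jordan_apply, if_neg hib, zero_mul]
      · intro hmem; exact absurd (Finset.mem_univ _) hmem
    · rw [Finset.sum_eq_zero, if_neg (by omega)]
      intro b _
      have hib : (i : ℕ) + 1 ≠ (b : ℕ) := by have := b.isLt; omega
      rw [jordan_apply, if_neg hib, zero_mul]

lemma mul_pow_apply {m : ℕ} (a : Matrix (Fin (m+1)) (Fin (m+1)) R) (k : ℕ)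
    (p q : Fin (m+1)) :
    (a * jordanBlock (m+1) R ^ k) p q =
      if hk : k ≤ (q : ℕ) then a p ⟨(q : ℕ) - k, by omega⟩ else 0 := by
  rw [Matrix.mul_apply]
  by_cases hk : k ≤ (q : ℕ)
  · rw [dif_pos hk, Finset.sum_eq_single (⟨(q:ℕ) - k, by omega⟩ : Fin (m+1))]
    · rw [jordan_pow_apply, if_pos (by simp only [Fin.val_mk]; omega), mul_one]
    · intro b _ hb
      rw [jordan_pow_apply,
        if_neg (fun hc => hb (Fin.eq_mk_iff_val_eq.mpr (by omega))), mul_zero]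
    · intro hmem; exact absurd (Finset.mem_univ _) hmem
  · rw [dif_neg hk, Finset.sum_eq_zero]
    intro b _
    rw [jordan_pow_apply, if_neg (by omega), mul_zero]

lemma pow_mul_apply {m : ℕ} (a : Matrix (Fin (m+1)) (Fin (m+1)) R) (k : ℕ)
    (p q : Fin (m+1)) :
    (jordanBlock (m+1) R ^ k * a) p q =
      if hk : (p : ℕ) + k ≤ m then a ⟨(p : ℕ) + k, by omega⟩ q else 0 := by
  rw [Matrix.mul_apply]
  by_cases hk : (p : ℕ) + k ≤ m
  · rw [dif_pos hk, Finset.sum_eq_single (⟨(p:ℕ) + k, by omega⟩ : Fin (m+1))]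
    · rw [jordan_pow_apply, if_pos rfl, one_mul]
    · intro b _ hb
      rw [jordan_pow_apply,
        if_neg (fun hc => hb (Fin.eq_mk_iff_val_eq.mpr (by omega))), zero_mul]
    · intro hmem; exact absurd (Finset.mem_univ _) hmem
  · rw [dif_neg hk, Finset.sum_eq_zero]
    intro b _
    rw [jordan_pow_apply, if_neg (by have := b.isLt; omega), zero_mul]

lemma centralizer_apply {m : ℕ} (a : Matrix (Fin (m+1)) (Fin (m+1)) R)
    (ha : jordanBlock (m+1) R * a = a * jordanBlock (m+1) R) (i j : Fin (m+1)) :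
    a i j = if h : (i : ℕ) ≤ (j : ℕ) then a 0 ⟨(j : ℕ) - (i : ℕ), by omega⟩ else 0 := by
  have key : ∀ p q : Fin (m+1),
      (if h : (p : ℕ) + 1 ≤ m then a ⟨(p:ℕ)+1, by omega⟩ q else 0)
        = if h : 1 ≤ (q : ℕ) then a p ⟨(q:ℕ)-1, by omega⟩ else 0 := by
    intro p q
    have h1 := congrFun (congrFun ha p) q
    rw [show jordanBlock (m+1) R * a = jordanBlock (m+1) R ^ 1 * a by rw [pow_one],
        show a * jordanBlock (m+1) R = a * jordanBlock (m+1) R ^ 1 by rw [pow_one]] at h1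
    rw [pow_mul_apply, mul_pow_apply] at h1
    exact h1
  suffices H : ∀ t (i j : Fin (m+1)), (i : ℕ) = t →
      a i j = if h : (i : ℕ) ≤ (j : ℕ) then a 0 ⟨(j : ℕ) - (i : ℕ), by omega⟩ else 0 from
    H (i : ℕ) i j rfl
  intro t
  induction t with
  | zero =>
    intro i j hi
    have hi0 : i = 0 := Fin.ext (by simpa using hi)
    subst hi0
    rw [dif_pos (by simp)]
    exact congrArg (a 0) (Fin.eq_mk_iff_val_eq.mpr (by simp))
  | succ t iht =>
    intro i j hi
    have ht : t + 1 ≤ m := by have := i.isLt; omega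
    have hkey := key ⟨t, by omega⟩ j
    simp only [Fin.val_mk] at hkey
    rw [dif_pos ht] at hkey
    have hfirst : a i j = if h : 1 ≤ (j : ℕ) then a ⟨t, by omega⟩ ⟨(j:ℕ)-1, by omega⟩ else 0 := by
      rw [← hkey]
      exact congrFun (congrArg a (Fin.eq_mk_iff_val_eq.mpr hi)) j
    rw [hfirst]
    have hsecond := iht ⟨t, by omega⟩ ⟨(j:ℕ)-1, by omega⟩ rfl
    simp only [Fin.val_mk] at hsecond
    by_cases hj : 1 ≤ (j : ℕ)
    · rw [dif_pos hj, hsecond]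
      by_cases hij : (i : ℕ) ≤ (j : ℕ)
      · rw [dif_pos (by omega), dif_pos hij]
        exact congrArg (a 0) (Fin.eq_mk_iff_val_eq.mpr (by simp only [Fin.val_mk]; omega))
      · rw [dif_neg (by omega), dif_neg hij]
    · rw [dif_neg hj, dif_neg (by omega)]

lemma centralizer_repr {m : ℕ} (a : Matrix (Fin (m+1)) (Fin (m+1)) R)
    (ha : jordanBlock (m+1) R * a = a * jordanBlock (m+1) R) :
    a = ∑ k : Fin (m+1), a 0 k • jordanBlock (m+1) R ^ (k : ℕ) := by
  funext i j
  rw [Matrix.sum_apply]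
  simp only [Matrix.smul_apply, jordan_pow_apply, smul_eq_mul]
  rw [centralizer_apply a ha i j]
  by_cases hij : (i : ℕ) ≤ (j : ℕ)
  · rw [dif_pos hij, eq_comm,
      Finset.sum_eq_single (⟨(j:ℕ)-(i:ℕ), by omega⟩ : Fin (m+1))]
    · rw [if_pos (by simp only [Fin.val_mk]; omega), mul_one]
    · intro b _ hb
      rw [if_neg (fun hc => hb (Fin.eq_mk_iff_val_eq.mpr (by omega))), mul_zero]
    · intro hmem; exact absurd (Finset.mem_univ _) hmem
  · rw [dif_neg hij, eq_comm, Finset.sum_eq_zero]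
    intro b _
    rw [if_neg (by omega), mul_zero]

end FrobAux

/-- The extension `S_n(J_n,R)/R` is a Frobenius extension: there exist an `R`-`R`-bimodule
homomorphism `E : S_n(J_n,R) → R` (an `R`-linear map, since `R` is central) and elements
`X_0,…,X_{n-1}`, `Y_0,…,Y_{n-1}` with `∑ E(a X_i) Y_i = a = ∑ X_i E(Y_i a)` for all `a`. -/
theorem stmt_3 (R : Type*) [CommRing R] (n : ℕ) :
    ∃ (E : Subalgebra.centralizer R {jordanBlock n R} →ₗ[R] R)
      (X Y : Fin n → Subalgebra.centralizer R {jordanBlock n R}),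
      ∀ a : Subalgebra.centralizer R {jordanBlock n R},
        (∑ i : Fin n, E (a * X i) • Y i = a) ∧
        (∑ i : Fin n, E (Y i * a) • X i = a) := by
  obtain _ | m := n
  · exact ⟨0, 0, 0, fun a => ⟨Subsingleton.elim _ _, Subsingleton.elim _ _⟩⟩
  have hmem : ∀ k : ℕ,
      jordanBlock (m+1) R ^ k ∈ Subalgebra.centralizer R {jordanBlock (m+1) R} := by
    intro k
    rw [Subalgebra.mem_centralizer_iff]
    intro g hg
    rw [Set.mem_singleton_iff] at hg
    subst hg
    exact ((Commute.refl _).pow_right k).eq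
  refine ⟨{ toFun := fun a => a.1 0 (Fin.last m)
            map_add' := fun x y => rfl
            map_smul' := fun r x => rfl },
          fun i => ⟨jordanBlock (m+1) R ^ (i : ℕ), hmem _⟩,
          fun i => ⟨jordanBlock (m+1) R ^ (m - (i : ℕ)), hmem _⟩, ?_⟩
  intro a
  have ha : jordanBlock (m+1) R * a.1 = a.1 * jordanBlock (m+1) R :=
    (Subalgebra.mem_centralizer_iff _).mp a.2 _ rfl
  constructor
  · apply Subtype.ext
    rw [AddSubmonoidClass.coe_finset_sum]
    simp only [LinearMap.coe_mk, AddHom.coe_mk, SetLike.val_smul, MulMemClass.coe_mul]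
    have hterm : ∀ i : Fin (m+1),
        ((a.1 * jordanBlock (m+1) R ^ (i : ℕ)) 0 (Fin.last m))
            • jordanBlock (m+1) R ^ (m - (i : ℕ))
          = a.1 0 (Fin.rev i) • jordanBlock (m+1) R ^ ((Fin.rev i : ℕ)) := by
      intro i
      rw [FrobAux.mul_pow_apply, dif_pos (by simp [Fin.val_last]; omega)]
      have h1 : (⟨(Fin.last m : ℕ) - (i : ℕ), by omega⟩ : Fin (m+1)) = Fin.rev i :=
        Fin.ext (by simp only [Fin.val_rev, Fin.val_last, Fin.val_mk]; omega)
      have h2 : m - (i : ℕ) = (Fin.rev i : ℕ) := by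
        simp only [Fin.val_rev]; omega
      rw [h1, h2]
    show ∑ i : Fin (m+1), ((a.1 * jordanBlock (m+1) R ^ (i : ℕ)) 0 (Fin.last m))
        • jordanBlock (m+1) R ^ (m - (i : ℕ)) = a.1
    rw [Finset.sum_congr rfl fun i _ => hterm i]
    rw [Fintype.sum_bijective Fin.rev Fin.rev_involutive.bijective _
      (fun k => a.1 0 k • jordanBlock (m+1) R ^ (k : ℕ)) (fun x => rfl)]
    exact (FrobAux.centralizer_repr a.1 ha).symm
  · apply Subtype.ext
    rw [AddSubmonoidClass.coe_finset_sum]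
    simp only [LinearMap.coe_mk, AddHom.coe_mk, SetLike.val_smul, MulMemClass.coe_mul]
    have hterm : ∀ i : Fin (m+1),
        ((jordanBlock (m+1) R ^ (m - (i : ℕ)) * a.1) 0 (Fin.last m))
            • jordanBlock (m+1) R ^ ((i : ℕ))
          = a.1 0 i • jordanBlock (m+1) R ^ ((i : ℕ)) := by
      intro i
      rw [FrobAux.pow_mul_apply, dif_pos (by simp only [Fin.val_zero]; omega)]
      have hi : (i : ℕ) ≤ m := by omega
      have h1 : a.1 ⟨((0 : Fin (m+1)) : ℕ) + (m - (i : ℕ)), by simp⟩ (Fin.last m)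
          = a.1 0 i := by
        rw [FrobAux.centralizer_apply a.1 ha, dif_pos (by simp only [Fin.val_mk, Fin.val_zero, Fin.val_last]; omega)]
        exact congrArg (a.1 0) (Fin.eq_mk_iff_val_eq.mpr (by simp only [Fin.val_mk, Fin.val_zero, Fin.val_last]; omega)).symm
      rw [h1]
    show ∑ i : Fin (m+1), ((jordanBlock (m+1) R ^ (m - (i : ℕ)) * a.1) 0 (Fin.last m))
        • jordanBlock (m+1) R ^ ((i : ℕ)) = a.1
    rw [Finset.sum_congr rfl fun i _ => hterm i]
    exact (FrobAux.centralizer_repr a.1 ha).symm
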